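/- arXiv:1602.06498 — 3 statements merged into one kernel-verified Lean document; each statement's English description precedes it below -/
import Mathlib

section
/- Let A ∈ ℝ^{n×n}, Σ ∈ ℝ^{n×n}, and τ > 0 satisfy τ < 1/(2 max(0, ln ρ(e^A))), where ρ denotes spectral radius. Then A_τ := A - (1/(2τ)) I is Hurwitz, and P := (1/τ) ∫₀^∞ e^{-t/τ} e^{tA} Σ e^{tAᵀ} dt satisfies the Lyapunov equation A_τ P + P A_τᵀ + (1/τ)Σ = 0. -/
open Matrix MeasureTheory

section AuxLinfty

open NormedSpace

attribute [local instance] Matrix.linftyOpSemiNormedRing Matrix.linftyOpNormedRing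
  Matrix.linftyOpNormedAlgebra

theorem DSMA.aux_deriv {n : ℕ} (A : Matrix (Fin n) (Fin n) ℝ) (t : ℝ) (i j : Fin n) :
    HasDerivAt (fun s : ℝ => exp (s • A) i j) ((A * exp (t • A)) i j) t := by
  have h := hasDerivAt_exp_smul_const' (𝕂 := ℝ) A t
  let L : Matrix (Fin n) (Fin n) ℝ →L[ℝ] ℝ :=
    LinearMap.toContinuousLinearMap
      { toFun := fun M => M i j, map_add' := fun _ _ => rfl, map_smul' := fun _ _ => rfl }
  exact L.hasFDerivAt.comp_hasDerivAt t h

theorem DSMA.aux_exp_map {n : ℕ} (A : Matrix (Fin n) (Fin n) ℝ) :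
    (exp A).map Complex.ofReal = exp (A.map Complex.ofReal) := by
  have hcont : Continuous fun M : Matrix (Fin n) (Fin n) ℝ => M.map Complex.ofReal :=
    continuous_pi fun i => continuous_pi fun j =>
      Complex.continuous_ofReal.comp ((continuous_apply j).comp (continuous_apply i))
  have h := map_exp (Complex.ofRealHom.mapMatrix (m := Fin n)) hcont A
  exact h

theorem DSMA.aux_spec {n : ℕ} (hn : 0 < n) (A : Matrix (Fin n) (Fin n) ℝ) {z : ℂ}
    (hz : z ∈ spectrum ℂ (A.map Complex.ofReal)) :
    Real.exp z.re ≤ (spectralRadius ℂ ((exp A).map Complex.ofReal)).toReal := by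
  haveI : Nonempty (Fin n) := Fin.pos_iff_nonempty.mp hn
  have h1 : exp z ∈ spectrum ℂ (exp (A.map Complex.ofReal)) :=
    spectrum.exp_mem_exp (A.map Complex.ofReal) hz
  rw [← DSMA.aux_exp_map] at h1
  set a := (exp A).map Complex.ofReal
  have hfin : spectralRadius ℂ a ≠ ⊤ :=
    ((spectrum.spectralRadius_le_nnnorm (𝕜 := ℂ) a).trans_lt ENNReal.coe_lt_top).ne
  have h2 : (‖exp z‖₊ : ENNReal) ≤ spectralRadius ℂ a :=
    le_iSup₂ (f := fun k (_ : k ∈ spectrum ℂ a) => (‖k‖₊ : ENNReal)) (exp z) h1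
  have h3 : ‖exp z‖ ≤ (spectralRadius ℂ a).toReal := by
    have := ENNReal.toReal_mono hfin h2
    simpa using this
  calc Real.exp z.re = ‖exp z‖ := by
        rw [← Complex.exp_eq_exp_ℂ, Complex.norm_exp]
    _ ≤ _ := h3

theorem DSMA.aux_gelfand {n : ℕ} (hn : 0 < n) (B : Matrix (Fin n) (Fin n) ℝ) {r : ℝ}
    (hr : (spectralRadius ℂ (B.map Complex.ofReal)).toReal < r) (hr0 : 0 < r) :
    ∀ᶠ m : ℕ in Filter.atTop, ∀ i j, |(B ^ m) i j| ≤ r ^ m := by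
  haveI : Nonempty (Fin n) := Fin.pos_iff_nonempty.mp hn
  set a := B.map Complex.ofReal with ha
  have hfin : spectralRadius ℂ a ≠ ⊤ :=
    ((spectrum.spectralRadius_le_nnnorm (𝕜 := ℂ) a).trans_lt ENNReal.coe_lt_top).ne
  have hlt : spectralRadius ℂ a < ENNReal.ofReal r := by
    rw [← ENNReal.ofReal_toReal hfin]
    exact (ENNReal.ofReal_lt_ofReal_iff hr0).mpr hr
  have hG := spectrum.pow_nnnorm_pow_one_div_tendsto_nhds_spectralRadius a
  have hev : ∀ᶠ m : ℕ in Filter.atTop,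
      (‖a ^ m‖₊ : ENNReal) ^ (1 / m : ℝ) < ENNReal.ofReal r :=
    hG.eventually_lt_const hlt
  filter_upwards [hev, Filter.eventually_gt_atTop 0] with m hm hm0 i j
  have hmR : (0:ℝ) < (m:ℝ) := by exact_mod_cast hm0
  have h3 := ENNReal.rpow_lt_rpow hm hmR
  have hcoll : (((‖a ^ m‖₊ : ENNReal) ^ (1 / m : ℝ)) ^ (m:ℝ)) = (‖a ^ m‖₊ : ENNReal) := by
    rw [← ENNReal.rpow_mul, one_div, inv_mul_cancel₀ hmR.ne', ENNReal.rpow_one]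
  rw [hcoll, ENNReal.ofReal_rpow_of_pos hr0, Real.rpow_natCast] at h3
  have h4 : ‖a ^ m‖ ≤ r ^ m := by
    have := (ENNReal.lt_ofReal_iff_toReal_lt ENNReal.coe_ne_top).mp h3
    rw [ENNReal.coe_toReal, coe_nnnorm] at this
    exact this.le
  have h5 : ‖(a ^ m) i j‖₊ ≤ ‖a ^ m‖₊ := by
    rw [Matrix.linfty_opNNNorm_def]
    refine le_trans (Finset.single_le_sum (f := fun j => ‖(a ^ m) i j‖₊)
      (fun _ _ => zero_le) (Finset.mem_univ j)) ?_
    exact Finset.le_sup (f := fun i => ∑ j, ‖(a ^ m) i j‖₊) (Finset.mem_univ i)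
  have h6 : a ^ m = (B ^ m).map Complex.ofReal := by
    have := map_pow (Complex.ofRealHom.mapMatrix (m := Fin n)) B m
    exact this.symm
  calc |(B ^ m) i j| = ‖(a ^ m) i j‖ := by
        rw [h6, Matrix.map_apply, Complex.norm_real, Real.norm_eq_abs]
    _ ≤ ‖a ^ m‖ := h5
    _ ≤ r ^ m := h4

end AuxLinfty

attribute [local instance] Matrix.normedAddCommGroup Matrix.normedSpace

namespace DSMA

open NormedSpace

variable {n : ℕ}

theorem norm_mul_le' (X Y : Matrix (Fin n) (Fin n) ℝ) : ‖X * Y‖ ≤ (n : ℝ) * ‖X‖ * ‖Y‖ := by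
  refine (Matrix.norm_le_iff (by positivity)).mpr fun i j => ?_
  calc ‖(X * Y) i j‖ = |∑ k, X i k * Y k j| := by rw [Matrix.mul_apply]; rfl
    _ ≤ ∑ k, |X i k * Y k j| := Finset.abs_sum_le_sum_abs _ _
    _ ≤ ∑ _k : Fin n, ‖X‖ * ‖Y‖ := by
        refine Finset.sum_le_sum fun k _ => ?_
        rw [abs_mul]
        gcongr
        · exact Matrix.norm_entry_le_entrywise_sup_norm X
        · exact Matrix.norm_entry_le_entrywise_sup_norm Y
    _ = (n : ℝ) * ‖X‖ * ‖Y‖ := by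
        rw [Finset.sum_const, Finset.card_univ, Fintype.card_fin, nsmul_eq_mul, mul_assoc]

noncomputable def mulCLM (n : ℕ) :=
  LinearMap.mkContinuous₂ (LinearMap.mul ℝ (Matrix (Fin n) (Fin n) ℝ)) n
    fun X Y => norm_mul_le' X Y

@[simp] theorem mulCLM_apply (X Y : Matrix (Fin n) (Fin n) ℝ) : mulCLM n X Y = X * Y := rfl

theorem expE_hasDerivAt (A : Matrix (Fin n) (Fin n) ℝ) (t : ℝ) :
    HasDerivAt (fun s : ℝ => exp (s • A)) (A * exp (t • A)) t := by
  exact hasDerivAt_pi.mpr fun i => hasDerivAt_pi.mpr fun j => DSMA.aux_deriv A t i j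

theorem G_hasDerivAt (A Sig : Matrix (Fin n) (Fin n) ℝ) (t : ℝ) :
    HasDerivAt (fun s : ℝ => exp (s • A) * Sig * exp (s • Aᵀ))
      (A * exp (t • A) * Sig * exp (t • Aᵀ)
        + exp (t • A) * Sig * (Aᵀ * exp (t • Aᵀ))) t := by
  have hE := expE_hasDerivAt A t
  have hET := expE_hasDerivAt Aᵀ t
  have h1 : HasDerivAt (fun s : ℝ => mulCLM n (exp (s • A)))
      (mulCLM n (A * exp (t • A))) t :=
    (mulCLM n).hasFDerivAt.comp_hasDerivAt t hE
  have h2 : HasDerivAt (fun s : ℝ => exp (s • A) * Sig)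
      (A * exp (t • A) * Sig) t := by
    have h := h1.clm_apply (hasDerivAt_const t Sig)
    simp at h
    exact h
  have h3 : HasDerivAt (fun s : ℝ => mulCLM n (exp (s • A) * Sig))
      (mulCLM n (A * exp (t • A) * Sig)) t :=
    (mulCLM n).hasFDerivAt.comp_hasDerivAt t h2
  exact h3.clm_apply hET

theorem F_hasDerivAt (A Sig : Matrix (Fin n) (Fin n) ℝ) {τ : ℝ} (hτ : τ ≠ 0) (t : ℝ) :
    HasDerivAt (fun s : ℝ => Real.exp (-s/τ) • (exp (s • A) * Sig * exp (s • Aᵀ)))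
      ((A - (1/(2*τ)) • 1) * (Real.exp (-t/τ) • (exp (t • A) * Sig * exp (t • Aᵀ)))
        + (Real.exp (-t/τ) • (exp (t • A) * Sig * exp (t • Aᵀ)))
          * (A - (1/(2*τ)) • 1)ᵀ) t := by
  have hc : HasDerivAt (fun s : ℝ => Real.exp (-s/τ)) ((-1/τ) * Real.exp (-t/τ)) t := by
    have : HasDerivAt (fun s : ℝ => -s/τ) (-1/τ) t := by
      simpa using ((hasDerivAt_id t).neg.div_const τ)
    simpa [mul_comm, Function.comp_def] using (Real.hasDerivAt_exp (-t/τ)).comp t this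
  have hG := G_hasDerivAt A Sig t
  have h : HasDerivAt (fun s : ℝ => Real.exp (-s/τ) • (exp (s • A) * Sig * exp (s • Aᵀ))) _ t :=
    hc.smul hG
  convert h using 1
  set E := exp (t • A)
  set ET := exp (t • Aᵀ)
  have hcomm : Aᵀ * ET = ET * Aᵀ := (((Commute.refl Aᵀ).smul_left t).exp_left).symm.eq
  rw [Matrix.transpose_sub, Matrix.transpose_smul, Matrix.transpose_one]
  simp only [sub_mul, mul_sub, Matrix.smul_mul, Matrix.mul_smul, one_mul, mul_one,
    smul_add, hcomm, mul_assoc]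
  match_scalars <;> field_simp <;> ring

theorem exp_growth (hn : 0 < n) (A : Matrix (Fin n) (Fin n) ℝ) {c : ℝ} (hc0 : 0 < c)
    (hc : Real.log ((spectralRadius ℂ ((exp A).map Complex.ofReal)).toReal) < c) :
    ∃ K : ℝ, 0 < K ∧ ∀ t : ℝ, 0 ≤ t → ‖exp (t • A)‖ ≤ K * Real.exp (c * t) := by
  set B := exp A with hB
  set ρ := (spectralRadius ℂ (B.map Complex.ofReal)).toReal with hρ
  have hρ0 : 0 ≤ ρ := ENNReal.toReal_nonneg
  set r := Real.exp c with hr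
  have hr0 : 0 < r := Real.exp_pos c
  have hρr : ρ < r := by
    rcases eq_or_lt_of_le hρ0 with h | h
    · exact lt_of_le_of_lt h.symm.le hr0
    · calc ρ = Real.exp (Real.log ρ) := (Real.exp_log h).symm
        _ < r := Real.exp_lt_exp.mpr hc
  obtain ⟨M₀, hM₀⟩ := (Filter.eventually_atTop).mp (DSMA.aux_gelfand hn B hρr hr0)
  have hBm : ∀ m : ℕ, M₀ ≤ m → ‖B ^ m‖ ≤ r ^ m := fun m hm =>
    (Matrix.norm_le_iff (by positivity)).mpr fun i j => by
      rw [Real.norm_eq_abs]; exact hM₀ m hm i j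
  have hcont : Continuous fun s : ℝ => exp (s • A) :=
    continuous_iff_continuousAt.mpr fun s => (expE_hasDerivAt A s).continuousAt
  obtain ⟨C₀, hC₀⟩ := (isCompact_Icc (a := (0:ℝ)) (b := 1)).exists_bound_of_continuousOn
    hcont.continuousOn
  set K₁ : ℝ := 1 + ∑ m ∈ Finset.range M₀, ‖B ^ m‖ / r ^ m with hK₁def
  have hK₁1 : 1 ≤ K₁ := by
    have h0 : 0 ≤ ∑ m ∈ Finset.range M₀, ‖B ^ m‖ / r ^ m :=
      Finset.sum_nonneg fun m _ => by positivity
    rw [hK₁def]; linarith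
  have hK₁ : ∀ m : ℕ, ‖B ^ m‖ ≤ K₁ * r ^ m := by
    intro m
    rcases le_or_gt M₀ m with h | h
    · calc ‖B ^ m‖ ≤ r ^ m := hBm m h
        _ ≤ K₁ * r ^ m := by nlinarith [pow_pos hr0 m]
    · have h1 : ‖B ^ m‖ / r ^ m ≤ K₁ := by
        have hle : ‖B ^ m‖ / r ^ m ≤ ∑ k ∈ Finset.range M₀, ‖B ^ k‖ / r ^ k :=
          Finset.single_le_sum (f := fun k => ‖B ^ k‖ / r ^ k)
            (fun k _ => by positivity) (Finset.mem_range.mpr h)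
        rw [hK₁def]; linarith
      have hrm := pow_pos hr0 m
      calc ‖B ^ m‖ = (‖B ^ m‖ / r ^ m) * r ^ m := by field_simp
        _ ≤ K₁ * r ^ m := by nlinarith
  refine ⟨(n : ℝ) * max C₀ 1 * K₁, by positivity, fun t ht => ?_⟩
  set m : ℕ := ⌊t⌋₊ with hm
  set s : ℝ := t - m with hs
  have hs0 : 0 ≤ s := sub_nonneg.mpr (Nat.floor_le ht)
  have hs1 : s ≤ 1 := by
    have := Nat.lt_floor_add_one t
    simp only [hs]; linarith
  have hdecomp : exp (t • A) = exp (s • A) * B ^ m := by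
    have hcomm : Commute (s • A) ((m : ℝ) • A) :=
      ((Commute.refl A).smul_left s).smul_right (m : ℝ)
    have : t • A = s • A + (m : ℝ) • A := by
      rw [← add_smul]; congr 1; simp [hs]
    rw [this, Matrix.exp_add_of_commute _ _ hcomm]
    congr 1
    rw [Nat.cast_smul_eq_nsmul ℝ m A]
    exact Matrix.exp_nsmul m A
  calc ‖exp (t • A)‖ ≤ (n : ℝ) * ‖exp (s • A)‖ * ‖B ^ m‖ := by
        rw [hdecomp]; exact norm_mul_le' _ _
    _ ≤ (n : ℝ) * max C₀ 1 * (K₁ * r ^ m) := by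
        have h1 : ‖exp (s • A)‖ ≤ max C₀ 1 :=
          le_trans (hC₀ s ⟨hs0, hs1⟩) (le_max_left _ _)
        have h2 := hK₁ m
        have hn0 : (0:ℝ) ≤ n := Nat.cast_nonneg n
        have h4 : (0:ℝ) ≤ ‖B ^ m‖ := norm_nonneg _
        exact mul_le_mul (mul_le_mul_of_nonneg_left h1 hn0) h2 h4 (by positivity)
    _ ≤ (n : ℝ) * max C₀ 1 * K₁ * Real.exp (c * t) := by
        have hrm : r ^ m ≤ Real.exp (c * t) := by
          rw [hr, ← Real.exp_nat_mul]
          exact Real.exp_le_exp.mpr (by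
            have hmt : (m : ℝ) ≤ t := Nat.floor_le ht
            nlinarith)
        have h5 : (0:ℝ) < max C₀ 1 := lt_max_of_lt_right one_pos
        have h6 : (n:ℝ) * max C₀ 1 * (K₁ * r ^ m)
            ≤ (n:ℝ) * max C₀ 1 * (K₁ * Real.exp (c*t)) := by gcongr
        calc (n:ℝ) * max C₀ 1 * (K₁ * r ^ m)
            ≤ (n:ℝ) * max C₀ 1 * (K₁ * Real.exp (c*t)) := h6
          _ = (n:ℝ) * max C₀ 1 * K₁ * Real.exp (c*t) := by ring

end DSMA

open NormedSpace

set_option maxHeartbeats 1000000 in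
theorem discounted_second_moment_ALE
    {n : ℕ} (A Sig : Matrix (Fin n) (Fin n) ℝ) (τ : ℝ) (hτ : 0 < τ)
    (hτmax : τ < 1 / (2 * max 0
      (Real.log ((spectralRadius ℂ ((NormedSpace.exp A).map Complex.ofReal)).toReal))))
    (Aτ : Matrix (Fin n) (Fin n) ℝ)
    (hAτ : Aτ = A - (1 / (2 * τ)) • (1 : Matrix (Fin n) (Fin n) ℝ))
    (P : Matrix (Fin n) (Fin n) ℝ)
    (hP : P = (1 / τ) • ∫ t in Set.Ioi (0 : ℝ),
        Real.exp (-t / τ) • (NormedSpace.exp (t • A) * Sig * NormedSpace.exp (t • Aᵀ))) :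
    (∀ μ ∈ spectrum ℂ (Aτ.map Complex.ofReal), μ.re < 0) ∧
      Aτ * P + P * Aτᵀ + (1 / τ) • Sig = 0 := by
  rcases Nat.eq_zero_or_pos n with hn0 | hn
  · subst hn0
    constructor
    · intro μ hμ
      exact absurd (isUnit_of_subsingleton _) (spectrum.mem_iff.mp hμ)
    · exact Subsingleton.elim _ _
  set ρ : ℝ := (spectralRadius ℂ ((exp A).map Complex.ofReal)).toReal with hρdef
  have hτ' : τ ≠ 0 := hτ.ne'
  have hlogpos : 0 < Real.log ρ := by
    by_contra hle
    push_neg at hle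
    rw [max_eq_left hle] at hτmax
    simp only [mul_zero, div_zero] at hτmax
    linarith
  rw [max_eq_right hlogpos.le] at hτmax
  have h2τ : (0:ℝ) < 2 * τ := by linarith
  have hlog2 : Real.log ρ < 1 / (2 * τ) := by
    rw [lt_div_iff₀ (by linarith : (0:ℝ) < 2 * Real.log ρ)] at hτmax
    rw [lt_div_iff₀ h2τ]
    nlinarith
  constructor
  · intro μ hμ
    have hmap : Aτ.map Complex.ofReal
        = A.map Complex.ofReal - algebraMap ℂ _ (((1/(2*τ) : ℝ)) : ℂ) := by
      rw [hAτ]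
      ext i j
      simp only [Matrix.map_apply, Matrix.sub_apply, Matrix.smul_apply, Matrix.one_apply,
        Matrix.algebraMap_matrix_apply, smul_eq_mul, mul_ite, mul_one, mul_zero]
      split_ifs <;> simp
    rw [hmap, ← spectrum.sub_singleton_eq] at hμ
    obtain ⟨z, hz, w, hw, rfl⟩ := Set.mem_sub.mp hμ
    rw [Set.mem_singleton_iff] at hw
    subst hw
    have h1 : Real.exp z.re ≤ ρ := DSMA.aux_spec hn A hz
    have hρpos : 0 < ρ := lt_of_lt_of_le (Real.exp_pos _) h1
    have h2 : z.re ≤ Real.log ρ := (Real.le_log_iff_exp_le hρpos).mpr h1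
    have h3 : ((((1:ℝ)/(2*τ)) : ℝ) : ℂ).re = 1/(2*τ) := by simp
    rw [Complex.sub_re, h3]
    linarith
  · -- Lyapunov equation
    have h2τ' : (0:ℝ) < 1/(2*τ) := by positivity
    set c : ℝ := (Real.log ρ + 1/(2*τ))/2 with hcdef
    have hc0 : 0 < c := by rw [hcdef]; linarith
    have hcρ : Real.log ρ < c := by rw [hcdef]; linarith
    have hsum2τ : 1/(2*τ) + 1/(2*τ) = 1/τ := by
      rw [← add_div, show (1:ℝ)+1 = 2 by norm_num,
        div_eq_div_iff (by positivity : (0:ℝ) < 2*τ).ne' hτ.ne']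
      ring
    have hc2 : 2*c < 1/τ := by rw [hcdef]; linarith
    set ε : ℝ := 1/τ - 2*c with hεdef
    have hεpos : 0 < ε := by rw [hεdef]; linarith
    obtain ⟨K, hK0, hK⟩ := DSMA.exp_growth hn A hc0 hcρ
    set F : ℝ → Matrix (Fin n) (Fin n) ℝ :=
      fun t => Real.exp (-t/τ) • (exp (t • A) * Sig * exp (t • Aᵀ)) with hFdef
    have hT : ∀ t : ℝ, exp (t • Aᵀ) = (exp (t • A))ᵀ := fun t => by
      rw [← Matrix.transpose_smul, Matrix.exp_transpose]
    set Cb : ℝ := (n:ℝ)^2 * K^2 * ‖Sig‖ with hCbdef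
    have hCb0 : 0 ≤ Cb := by positivity
    have hFbound : ∀ t : ℝ, 0 ≤ t → ‖F t‖ ≤ Cb * Real.exp (-ε * t) := by
      intro t ht
      have hE := hK t ht
      have hET : ‖exp (t • Aᵀ)‖ ≤ K * Real.exp (c*t) := by
        rw [hT t, Matrix.norm_transpose]; exact hK t ht
      have hEn : (0:ℝ) ≤ ‖exp (t • A)‖ := norm_nonneg _
      have b1 : ‖exp (t • A) * Sig‖ ≤ (n:ℝ) * ‖exp (t • A)‖ * ‖Sig‖ :=
        DSMA.norm_mul_le' _ _
      have b2 : ‖exp (t • A) * Sig * exp (t • Aᵀ)‖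
          ≤ (n:ℝ) * ‖exp (t • A) * Sig‖ * ‖exp (t • Aᵀ)‖ := DSMA.norm_mul_le' _ _
      have hFt : ‖F t‖ = Real.exp (-t/τ) * ‖exp (t • A) * Sig * exp (t • Aᵀ)‖ := by
        rw [hFdef]
        rw [norm_smul, Real.norm_eq_abs, abs_of_pos (Real.exp_pos _)]
      rw [hFt]
      calc Real.exp (-t/τ) * ‖exp (t • A) * Sig * exp (t • Aᵀ)‖
          ≤ Real.exp (-t/τ) * ((n:ℝ) * ‖exp (t • A) * Sig‖ * ‖exp (t • Aᵀ)‖) :=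
            mul_le_mul_of_nonneg_left b2 (Real.exp_pos _).le
        _ ≤ Real.exp (-t/τ) * ((n:ℝ) * ((n:ℝ) * ‖exp (t • A)‖ * ‖Sig‖)
              * ‖exp (t • Aᵀ)‖) := by gcongr
        _ ≤ Real.exp (-t/τ) * ((n:ℝ) * ((n:ℝ) * (K * Real.exp (c*t)) * ‖Sig‖)
              * (K * Real.exp (c*t))) := by
            have h1 := Real.exp_pos (-t/τ)
            gcongr
        _ = Cb * Real.exp (-ε * t) := by
            rw [hCbdef, hεdef]
            rw [show -(1/τ - 2*c) * t = c*t + (c*t + (-t/τ)) by ring,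
              Real.exp_add, Real.exp_add]
            ring
    have hcont_F : Continuous F := continuous_iff_continuousAt.mpr fun t =>
      (DSMA.F_hasDerivAt A Sig hτ' t).continuousAt
    have hgInt : IntegrableOn (fun t : ℝ => Cb * Real.exp (-ε * t)) (Set.Ioi 0) :=
      (exp_neg_integrableOn_Ioi 0 hεpos).const_mul Cb
    letI : ContinuousENorm (Matrix (Fin n) (Fin n) ℝ) := SeminormedAddGroup.toContinuousENorm
    letI : TopologicalSpace.PseudoMetrizableSpace (Matrix (Fin n) (Fin n) ℝ) :=
      PseudoEMetricSpace.pseudoMetrizableSpace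
    have hInt : IntegrableOn F (Set.Ioi 0) := by
      refine Integrable.mono' hgInt hcont_F.aestronglyMeasurable.restrict ?_
      rw [ae_restrict_iff' measurableSet_Ioi]
      filter_upwards with t ht
      exact hFbound t (le_of_lt ht)
    have hTend : Filter.Tendsto F Filter.atTop (nhds 0) := by
      have hev : ∀ᶠ t in Filter.atTop, ‖F t‖ ≤ Cb * Real.exp (-ε * t) := by
        filter_upwards [Filter.eventually_ge_atTop (0:ℝ)] with t ht
        exact hFbound t ht
      have h1 : Filter.Tendsto (fun t : ℝ => ε * t) Filter.atTop Filter.atTop :=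
        Filter.Tendsto.const_mul_atTop hεpos Filter.tendsto_id
      have h2 : Filter.Tendsto (fun t : ℝ => Real.exp (-ε * t)) Filter.atTop (nhds 0) := by
        have h2' := Real.tendsto_exp_neg_atTop_nhds_zero.comp h1
        refine h2'.congr fun t => ?_
        simp [Function.comp, neg_mul]
      have h3 : Filter.Tendsto (fun t : ℝ => Cb * Real.exp (-ε * t))
          Filter.atTop (nhds 0) := by simpa using h2.const_mul Cb
      exact squeeze_zero_norm' hev h3
    set L : Matrix (Fin n) (Fin n) ℝ →L[ℝ] Matrix (Fin n) (Fin n) ℝ :=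
      DSMA.mulCLM n Aτ + (DSMA.mulCLM n).flip Aτᵀ with hLdef
    have hL : ∀ X, L X = Aτ * X + X * Aτᵀ := fun X => rfl
    have hderiv : ∀ t ∈ Set.Ioi (0:ℝ), HasDerivAt F (L (F t)) t := by
      intro t _
      have h := DSMA.F_hasDerivAt A Sig hτ' t
      rw [← hAτ] at h
      rw [hL]
      exact h
    have hIntDeriv : IntegrableOn (fun t => L (F t)) (Set.Ioi 0) :=
      L.integrable_comp hInt
    have hcontW : ContinuousWithinAt F (Set.Ici 0) 0 := hcont_F.continuousWithinAt
    have hFTC := integral_Ioi_of_hasDerivAt_of_tendsto hcontW hderiv hIntDeriv hTend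
    have hF0 : F 0 = Sig := by
      rw [hFdef]
      simp only [neg_zero, zero_div, Real.exp_zero, one_smul, zero_smul, exp_zero,
        one_mul, mul_one]
    have hswap : ∫ t in Set.Ioi (0:ℝ), L (F t) = L (∫ t in Set.Ioi (0:ℝ), F t) :=
      L.integral_comp_comm hInt
    rw [hswap, hF0, zero_sub] at hFTC
    rw [hL] at hFTC
    rw [hP]
    set I₀ := ∫ t in Set.Ioi (0:ℝ), F t
    calc Aτ * ((1/τ) • I₀) + ((1/τ) • I₀) * Aτᵀ + (1/τ) • Sig
        = (1/τ) • (Aτ * I₀ + I₀ * Aτᵀ + Sig) := by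
          rw [Matrix.mul_smul, Matrix.smul_mul, smul_add, smul_add]
      _ = (1/τ) • ((-Sig : Matrix (Fin n) (Fin n) ℝ) + Sig) := by rw [hFTC]
      _ = 0 := by simp
end

section
/- Let Θ be an invertible real antisymmetric N×N matrix, 𝒜 Hurwitz-shifted as 𝒜_τ := 𝒜 - (1/(2τ))I with 𝒜 satisfying 𝒜ᵀ = -Θ^{-1}𝒜Θ, and let 𝒫 be symmetric satisfying 𝒜_τ 𝒫 + 𝒫 𝒜_τᵀ + (1/τ)Σ = 0. Then P := 𝒫Θ^{-1} satisfies the Lie-algebraic equation [𝒜, P] = (1/τ)(P - ΣΘ^{-1}). -/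
open Matrix

theorem lie_algebraic_controllability_ALE
    {N : ℕ} (Θ cA Sig cP : Matrix (Fin N) (Fin N) ℝ) (τ : ℝ) (hτ : 0 < τ)
    (hΘinv : IsUnit Θ) (hΘ : Θᵀ = -Θ)
    (hcA : cAᵀ = -(Θ⁻¹ * cA * Θ)) (hcP : cPᵀ = cP)
    (cAτ : Matrix (Fin N) (Fin N) ℝ) (hcAτ : cAτ = cA - (1 / (2 * τ)) • (1 : Matrix (Fin N) (Fin N) ℝ))
    (hALE : cAτ * cP + cP * cAτᵀ + (1 / τ) • Sig = 0)
    (P : Matrix (Fin N) (Fin N) ℝ) (hP : P = cP * Θ⁻¹) :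
    cA * P - P * cA = (1 / τ) • (P - Sig * Θ⁻¹) := by
  have hdet : IsUnit Θ.det := (Matrix.isUnit_iff_isUnit_det Θ).mp hΘinv
  have hΘΘ : Θ * Θ⁻¹ = 1 := Matrix.mul_nonsing_inv Θ hdet
  subst hcAτ hP
  rw [Matrix.transpose_sub, Matrix.transpose_smul, Matrix.transpose_one, hcA] at hALE
  have h := congrArg (fun X => X * Θ⁻¹) hALE
  simp only [Matrix.add_mul, Matrix.sub_mul, Matrix.mul_sub, Matrix.mul_neg, Matrix.neg_mul,
    Matrix.smul_mul, Matrix.mul_smul, Matrix.one_mul, Matrix.mul_one, Matrix.zero_mul,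
    mul_assoc] at h
  rw [hΘΘ, Matrix.mul_one] at h
  simp only [mul_assoc]
  linear_combination (norm := module) h
end

section
/- Let Θ be an invertible real antisymmetric N×N matrix, 𝒜 Hamiltonian (𝒜ᵀ = -Θ^{-1}𝒜Θ), τ > 0, C ∈ ℝ^{m×N}, and let 𝒬 symmetric satisfy 𝒜_τᵀ 𝒬 + 𝒬 𝒜_τ + CᵀC = 0, where 𝒜_τ := 𝒜 - I/(2τ). Then Q := Θ𝒬 satisfies [𝒜, Q] = Θ CᵀC - (1/τ) Q. -/
open Matrix

theorem lie_algebraic_observability_ALE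
    {N m : ℕ} (Θ cA cQ : Matrix (Fin N) (Fin N) ℝ) (C : Matrix (Fin m) (Fin N) ℝ)
    (τ : ℝ) (hτ : 0 < τ)
    (hΘinv : IsUnit Θ) (hΘ : Θᵀ = -Θ)
    (hcA : cAᵀ = -(Θ⁻¹ * cA * Θ)) (hcQ : cQᵀ = cQ)
    (cAτ : Matrix (Fin N) (Fin N) ℝ) (hcAτ : cAτ = cA - (1 / (2 * τ)) • (1 : Matrix (Fin N) (Fin N) ℝ))
    (hALE : cAτᵀ * cQ + cQ * cAτ + Cᵀ * C = 0)
    (Q : Matrix (Fin N) (Fin N) ℝ) (hQ : Q = Θ * cQ) :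
    cA * Q - Q * cA = Θ * (Cᵀ * C) - (1 / τ) • Q := by
  subst hcAτ hQ
  have hdet := (Matrix.isUnit_iff_isUnit_det Θ).mp hΘinv
  have hinv : Θ * Θ⁻¹ = 1 := Matrix.mul_nonsing_inv Θ hdet
  have hΘA : Θ * cAᵀ = -(cA * Θ) := by
    rw [hcA, mul_neg, ← mul_assoc, ← mul_assoc, hinv, one_mul]
  have h2 : Θ * ((cA - (1 / (2 * τ)) • 1)ᵀ * cQ + cQ * (cA - (1 / (2 * τ)) • 1) + Cᵀ * C) = 0 := by
    rw [hALE, mul_zero]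
  have hs : (1 / (2 * τ)) + (1 / (2 * τ)) = 1 / τ := by rw [← two_mul, one_div, mul_inv, ← mul_assoc]; norm_num
  have h3 : -(cA * (Θ * cQ)) + (Θ * cQ) * cA - (1 / τ) • (Θ * cQ) + Θ * (Cᵀ * C) = 0 := by
    calc -(cA * (Θ * cQ)) + (Θ * cQ) * cA - (1 / τ) • (Θ * cQ) + Θ * (Cᵀ * C)
        = Θ * ((cA - (1 / (2 * τ)) • 1)ᵀ * cQ + cQ * (cA - (1 / (2 * τ)) • 1) + Cᵀ * C) := by
          rw [← hs]
          simp only [transpose_sub, transpose_smul, transpose_one, sub_mul, mul_sub, mul_add,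
            smul_mul_assoc, mul_smul_comm, mul_one, one_mul, ← mul_assoc, hΘA, add_smul]
          simp only [neg_mul, mul_assoc]
          abel
      _ = 0 := h2
  have h5 : cA * (Θ * cQ) - (Θ * cQ) * cA - (Θ * (Cᵀ * C) - (1 / τ) • (Θ * cQ)) =
      -(-(cA * (Θ * cQ)) + (Θ * cQ) * cA - (1 / τ) • (Θ * cQ) + Θ * (Cᵀ * C)) := by abel
  rw [h3, neg_zero] at h5
  exact sub_eq_zero.mp h5
end
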